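/- Let (γ,w) be an (n,mn)-parking function (m ≥ 1) whose Dyck path γ contains a factor N E^p N with p > m. Then dinv(γ,w) ≥ m - 1. -/

import Mathlib

open scoped Classical

inductive Step : Type
  | N | E | D
deriving DecidableEq, Repr

instance : Fintype Step :=
  ⟨{Step.N, Step.E, Step.D}, by intro x; cases x <;> simp⟩

open Step

/-- number of occurrences of the letter `s` in the word `w` -/
def cnt (s : Step) (w : List Step) : ℕ := w.count s

/-- Schröder (or Dyck, if no `D`s) path in an `n × n` grid: every prefix has at
least as many `N`s as `E`s, and the totals agree. -/
def IsSchroeder (w : List Step) : Prop :=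
  (∀ p : List Step, p <+: w → cnt E p ≤ cnt N p) ∧ cnt N w = cnt E w

/-- words that are concatenations of blocks `NE` and `D` -/
inductive IsNED : List Step → Prop
  | nil : IsNED []
  | ne {w} : IsNED w → IsNED (N :: E :: w)
  | d {w} : IsNED w → IsNED (D :: w)

/-- area of a Schröder path: the number of lower triangles between the path and the
main diagonal, computed as the sum over `N` and `D` steps of the height
`#N - #E` of the starting point of the step above the diagonal. -/
def areaAux : ℕ → List Step → ℕ
  | _, [] => 0
  | h, N :: w => h + areaAux (h+1) w
  | h, D :: w => h + areaAux h w
  | h, E :: w => areaAux (h-1) w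

def area (w : List Step) : ℕ := areaAux 0 w

/-- area of an `N/E` lattice path in a rectangular grid: the number of boxes under
the path, i.e. the sum over `E` steps of the number of `N` steps before it. -/
def areaNEAux : ℕ → List Step → ℕ
  | _, [] => 0
  | h, N :: w => areaNEAux (h+1) w
  | h, E :: w => h + areaNEAux h w
  | h, D :: w => areaNEAux h w

def areaNE (w : List Step) : ℕ := areaNEAux 0 w

/-- number of `N`s occurring before the `(j+1)`-st `E` (`j` is 0-indexed);
this is the height of the path above the horizontal interval `[j, j+1]`. -/
def nBefore : List Step → ℕ → ℕ
  | [], _ => 0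
  | N :: w, j => 1 + nBefore w j
  | E :: w, j => if j = 0 then 0 else nBefore w (j-1)
  | D :: w, j => nBefore w j

/-- number of `E`s occurring before the `(i+1)`-st `N` (`i` is 0-indexed). -/
def eBefore : List Step → ℕ → ℕ
  | [], _ => 0
  | E :: w, i => 1 + eBefore w i
  | N :: w, i => if i = 0 then 0 else eBefore w (i-1)
  | D :: w, i => eBefore w i

/-- number of `D`s occurring after the `e`-th `E` (`e` is 1-indexed). -/
def dAfterE : List Step → ℕ → ℕ
  | [], _ => 0
  | E :: w, e => if e ≤ 1 then cnt D w else dAfterE w (e-1)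
  | D :: w, e => dAfterE w e
  | N :: w, e => dAfterE w e

/-- Combined computation of `bounce(Γ(γ)) + numph(γ)` along the bounce path of
`Γ(γ)`.  Here `g` is the Schröder path, `w = Γ(g)` is the underlying Dyck path,
`nn` its size; the bounce path has corners (peaks) at the positions
`j₀ = 0, jₖ₊₁ = nBefore w jₖ`; each intermediate return `jₖ₊₁ < nn` contributes
`nn - jₖ₊₁` to the bounce of `Γ(g)`, and the peak with corner at `jₖ` is the start
of the `(jₖ+1)`-st east step, contributing to numph the number of diagonal steps of
`g` above it, i.e. after that east step. -/
def bounceAux (g w : List Step) (nn : ℕ) : ℕ → ℕ → ℕ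
  | 0, _ => 0
  | fuel+1, j =>
      dAfterE g (j+1) +
        (if nn ≤ nBefore w j ∨ nBefore w j ≤ j then 0
         else (nn - nBefore w j) + bounceAux g w nn fuel (nBefore w j))

/-- the bounce statistic of a Schröder path: `bounce(Γ(γ)) + numph(γ)` -/
def bounce (g : List Step) : ℕ :=
  let w := g.filter (fun s => s ≠ D)
  let nn := cnt E w
  if nn = 0 then 0 else bounceAux g w nn g.length 0

/-- the (signed) area coordinate `a_i = m·i - (#E before the (i+1)-st N)` of line `i`
(0-indexed) for a path in an `n × mn` grid. -/
def aLine (m : ℕ) (g : List Step) (i : ℕ) : ℤ := (m : ℤ) * i - eBefore g i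

/-- an `(n, mn)`-Dyck path: `n` north steps, `mn` east steps, no diagonal steps,
staying weakly above the main diagonal. -/
def IsParkingPath (n m : ℕ) (g : List Step) : Prop :=
  (∀ s ∈ g, s ≠ D) ∧ cnt N g = n ∧ cnt E g = m * n ∧
    ∀ p : List Step, p <+: g → cnt E p ≤ m * cnt N p

/-- an `(n, mn)`-parking function: an `(n,mn)`-Dyck path labelled by a permutation
`w` of `{0, …, n-1}` whose labels increase within each column. -/
def IsParking (n m : ℕ) (g : List Step) (w : Fin n → Fin n) : Prop :=
  IsParkingPath n m g ∧ Function.Bijective w ∧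
    ∀ i j : Fin n, (j : ℕ) = (i : ℕ) + 1 → eBefore g (i : ℕ) = eBefore g (j : ℕ) → w i < w j

/-- the diagonal inversion statistic of an `(n, mn)`-parking function -/
def dinv (n m : ℕ) (g : List Step) (w : Fin n → Fin n) : ℤ :=
  ∑ i : Fin n, ∑ j : Fin n,
    if (i : ℕ) < (j : ℕ) then
      (if w i < w j then max 0 ((m : ℤ) - |aLine m g (i : ℕ) - aLine m g (j : ℕ)|) else 0) +
        (if w j < w i then max 0 ((m : ℤ) - |aLine m g (j : ℕ) - aLine m g (i : ℕ) + 1|) else 0)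
    else 0

/-- the number of descents of the word `w` -/
def desNum (n : ℕ) (w : Fin n → Fin n) : ℕ :=
  ((Finset.range (n-1)).filter fun i =>
    ∃ hj : i + 1 < n, w ⟨i+1, hj⟩ < w ⟨i, Nat.lt_of_succ_lt hj⟩).card

/-- the major index of the word `w` (with positions 1-indexed as usual) -/
def majStat (n : ℕ) (w : Fin n → Fin n) : ℕ :=
  ∑ i ∈ (Finset.range (n-1)).filter (fun i =>
    ∃ hj : i + 1 < n, w ⟨i+1, hj⟩ < w ⟨i, Nat.lt_of_succ_lt hj⟩), (i+1)

/-- the reading word of a labelled path in an `n × mn` grid: labels are read along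
diagonals parallel to the main diagonal, starting with the farthest diagonal,
each diagonal being read from top-right to bottom-left. -/
def readWord (n m : ℕ) (g : List Step) (lab : ℕ → ℕ) : List ℕ :=
  ((List.range (m * n + 1)).map fun k =>
    (((List.range n).reverse.filter fun i => aLine m g i = (m * n : ℤ) - k).map lab)).flatten

/-- the labelling function `ℕ → ℕ` associated to a permutation of `Fin n` -/
def labOf {n : ℕ} (w : Fin n → Fin n) : ℕ → ℕ :=
  fun i => if h : i < n then (w ⟨i, h⟩ : ℕ) else 0

/-- one step of the algorithm `φ`, on the reversed word: find the rightmost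
(i.e. first in the reversed word) east step not followed by an east step,
and swap it with the letter following it. -/
def phiRevAux : List Step → List Step
  | a :: E :: t => if a ≠ E then E :: a :: t else a :: phiRevAux (E :: t)
  | a :: t => a :: phiRevAux t
  | [] => []

/-- one step of the algorithm `φ` -/
def phiStep (w : List Step) : List Step := (phiRevAux w.reverse).reverse

/-- the sequence `φ(γ) = (γ₀, γ₁, …, γ_{bounce γ})` produced by the algorithm -/
def phiSeq (g : List Step) : List (List Step) :=
  (List.range (bounce g + 1)).map fun i => phiStep^[i] g

/-- the union of all sequences `φ(γ)` over area-0 Schröder paths with `n` blocks -/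
def phiUniv (n : ℕ) : Set (List Step) :=
  {p | ∃ g, IsNED g ∧ cnt N g + cnt D g = n ∧ p ∈ phiSeq g}

/-- the map replacing each block `NE` by `N` and each `D` by `E` -/
def theta : List Step → List Step
  | N :: E :: w => N :: theta w
  | D :: w => E :: theta w
  | _ :: w => theta w
  | [] => []

/-- the cells of the hook-shaped Young diagram `(d, 1^{n-d})` (row 0 is the arm). -/
def hookCells (n d : ℕ) : Finset (ℕ × ℕ) :=
  ((Finset.range d).image fun c => ((0 : ℕ), c)) ∪
    ((Finset.range (n - d + 1)).image fun r => (r, (0 : ℕ)))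

/-- a standard Young tableau of hook shape `(d, 1^{n-d})`: `pos i` is the cell
`(row, column)` containing the entry `i+1`; entries increase along rows and columns. -/
structure HookSYT (n d : ℕ) where
  pos : Fin n → ℕ × ℕ
  mem : ∀ i, pos i ∈ hookCells n d
  inj : Function.Injective pos
  rowInc : ∀ i j : Fin n, (pos i).1 = (pos j).1 → (pos i).2 < (pos j).2 → i < j
  colInc : ∀ i j : Fin n, (pos i).2 = (pos j).2 → (pos i).1 < (pos j).1 → i < j

/-- the descent set of a standard Young tableau: entries `i ∈ {1, …, n-1}` such that
the entry `i+1` lies in a strictly higher row than `i`. -/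
def Des {n d : ℕ} (τ : HookSYT n d) : Finset ℕ :=
  (Finset.Icc 1 (n-1)).filter fun i =>
    ∃ hi : i < n, ∃ hi' : i - 1 < n, (τ.pos ⟨i - 1, hi'⟩).1 < (τ.pos ⟨i, hi⟩).1

/-- the major index of a standard Young tableau -/
def majT {n d : ℕ} (τ : HookSYT n d) : ℕ := ∑ i ∈ Des τ, i

/-- the number of descents of a standard Young tableau -/
def desT {n d : ℕ} (τ : HookSYT n d) : ℕ := (Des τ).card

/-- the maximum of the descent set -/
def maxDes {n d : ℕ} (τ : HookSYT n d) : ℕ := (Des τ).sup id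

/-- the map `M_{n,d}`: the path `γ₁γ₂⋯γₙ` with `γₙ = NE`, `γ_{n-i} = NE` if
`i ∈ Des τ` and `γ_{n-i} = D` otherwise -/
def Mmap (n d : ℕ) (τ : HookSYT n d) : List Step :=
  (((List.range n).map fun j =>
    if j = n - 1 then [N, E]
    else if (n - 1 - j) ∈ Des τ then [N, E] else [D])).flatten

/-- the map `S_{n,d}`: the path `γ₁⋯γ_{n-1}` with `γ_{n-i} = NNEE` if
`i = max Des τ` and `1 ∈ Des τ`, `γ_{n-i} = NDE` if `i = max Des τ` and
`1 ∉ Des τ`, `γ_{n-i} = NE` if `i = 1` or `i ∈ Des τ ∖ {max Des τ}`, and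
`γ_{n-i} = D` otherwise. -/
def Smap (n d : ℕ) (τ : HookSYT n d) : List Step :=
  (((List.range (n-1)).map fun j =>
    if (n - 1 - j) = maxDes τ then (if 1 ∈ Des τ then [N,N,E,E] else [N,D,E])
    else if (n - 1 - j) = 1 ∨ (n - 1 - j) ∈ Des τ then [N,E] else [D])).flatten

/-- the set `V_{n,d}` of Schröder paths of the form `Dʲ NNEE u` or `Dʲ NDE u`
with `u ∈ {NE,D}* NE`, having `n-d+1` north steps and `d-1` diagonal steps. -/
def Vset (n d : ℕ) : Set (List Step) :=
  {g | (∃ j u, IsNED u ∧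
      (g = List.replicate j D ++ [N,N,E,E] ++ (u ++ [N,E]) ∨
       g = List.replicate j D ++ [N,D,E] ++ (u ++ [N,E]))) ∧
     cnt N g = n - d + 1 ∧ cnt D g = d - 1}

/-- Schröder paths in an `n × n` grid with `dd` diagonal steps, area `a`,
ending with `NE` -/
def SchT (n dd a : ℕ) : Set (List Step) :=
  {g | IsSchroeder g ∧ cnt D g = dd ∧ cnt N g = n - dd ∧ area g = a ∧ ∃ u, g = u ++ [N, E]}

/-- the 'upper' forms: `Dʲ NNEE γ' NE NE` or `γ' NE Dʲ NNEE γ''` -/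
def UpperForm (g : List Step) : Prop :=
  (∃ j u, IsNED u ∧ g = List.replicate j D ++ [N,N,E,E] ++ u ++ [N,E,N,E]) ∨
  (∃ u j v, IsNED u ∧ g = u ++ [N,E] ++ List.replicate j D ++ [N,N,E,E] ++ v)

/-- the 'lower' forms: `Dʲ NNEE γ' D NE` or `γ' NDE Dʲ NE γ''` -/
def LowerForm (g : List Step) : Prop :=
  (∃ j u, IsNED u ∧ g = List.replicate j D ++ [N,N,E,E] ++ u ++ [D,N,E]) ∨
  (∃ u j v, IsNED u ∧ g = u ++ [N,D,E] ++ List.replicate j D ++ [N,E] ++ v)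

/-- the number of distinct columns of the path -/
def Tcols (n : ℕ) (g : List Step) : ℕ :=
  ((Finset.range n).image fun i => eBefore g i).card

/-- the `q`-integer `[k]_q = 1 + q + ⋯ + q^{k-1}` as a polynomial -/
noncomputable def qInt (k : ℕ) : Polynomial ℤ := ∑ i ∈ Finset.range k, Polynomial.X ^ i

/-- the `q`-factorial `[k]!_q` -/
noncomputable def qFact (k : ℕ) : Polynomial ℤ := ∏ i ∈ Finset.range k, qInt (i+1)

lemma eBefore_mono (g : List Step) : ∀ j : ℕ, eBefore g j ≤ eBefore g (j+1) := by
  induction g with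
  | nil => intro j; simp [eBefore]
  | cons a t ih =>
    intro j
    cases a with
    | N =>
      cases j with
      | zero => simp [eBefore]
      | succ j' => simpa [eBefore] using ih j'
    | E => simpa [eBefore] using ih j
    | D => simpa [eBefore] using ih j

lemma eBefore_append (u : List Step) : ∀ (t : List Step) (j : ℕ), cnt N u ≤ j →
    eBefore (u ++ t) j = cnt E u + eBefore t (j - cnt N u) := by
  induction u with
  | nil => intro t j _; simp [cnt]
  | cons a u' ih =>
    intro t j hj
    cases a with
    | N =>
      have h1 : cnt N u' + 1 ≤ j := by
        simpa [cnt, List.count_cons] using hj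
      have hj0 : j ≠ 0 := by omega
      have h2 := ih t (j-1) (by omega)
      have h3 : j - 1 - cnt N u' = j - (cnt N u' + 1) := by omega
      rw [h3] at h2
      simp [cnt, List.count_cons, eBefore, hj0] at h2 ⊢
      rw [h2]
    | E =>
      have h1 : cnt N u' ≤ j := by simpa [cnt, List.count_cons] using hj
      have h2 := ih t j h1
      simp [cnt, List.count_cons, eBefore] at h2 ⊢
      omega
    | D =>
      have h1 : cnt N u' ≤ j := by simpa [cnt, List.count_cons] using hj
      have h2 := ih t j h1
      simp [cnt, List.count_cons, eBefore] at h2 ⊢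
      omega

lemma eBefore_replicateE (p : ℕ) (t : List Step) (j : ℕ) :
    eBefore (List.replicate p E ++ t) j = p + eBefore t j := by
  induction p with
  | zero => simp
  | succ q ih => simp [List.replicate_succ, eBefore, ih]; omega

lemma eBefore_prefix : ∀ (g : List Step) (j : ℕ), j < cnt N g →
    ∃ q, q <+: g ∧ cnt N q = j ∧ cnt E q = eBefore g j := by
  intro g
  induction g with
  | nil => intro j h; simp [cnt] at h
  | cons a t ih =>
    intro j h
    cases a with
    | N =>
      cases j with
      | zero =>
        exact ⟨[], List.nil_prefix, by simp [cnt], by simp [cnt, eBefore]⟩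
      | succ j' =>
        have h' : j' < cnt N t := by
          simp [cnt, List.count_cons] at h ⊢; omega
        obtain ⟨q, hq, hqN, hqE⟩ := ih j' h'
        refine ⟨N :: q, List.cons_prefix_cons.mpr ⟨rfl, hq⟩, ?_, ?_⟩
        · simp [cnt, List.count_cons] at hqN ⊢; omega
        · simpa [cnt, List.count_cons, eBefore] using hqE
    | E =>
      have h' : j < cnt N t := by simpa [cnt, List.count_cons] using h
      obtain ⟨q, hq, hqN, hqE⟩ := ih j h'
      refine ⟨E :: q, List.cons_prefix_cons.mpr ⟨rfl, hq⟩, ?_, ?_⟩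
      · simpa [cnt, List.count_cons] using hqN
      · simp [cnt, List.count_cons, eBefore] at hqE ⊢; omega
    | D =>
      have h' : j < cnt N t := by simpa [cnt, List.count_cons] using h
      obtain ⟨q, hq, hqN, hqE⟩ := ih j h'
      refine ⟨D :: q, List.cons_prefix_cons.mpr ⟨rfl, hq⟩, ?_, ?_⟩
      · simpa [cnt, List.count_cons] using hqN
      · simpa [cnt, List.count_cons, eBefore] using hqE

lemma summand_nonneg (n m : ℕ) (g : List Step) (w : Fin n → Fin n) (i j : Fin n) :
    0 ≤ (if (i : ℕ) < (j : ℕ) then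
      (if w i < w j then max 0 ((m : ℤ) - |aLine m g (i : ℕ) - aLine m g (j : ℕ)|) else 0) +
        (if w j < w i then max 0 ((m : ℤ) - |aLine m g (j : ℕ) - aLine m g (i : ℕ) + 1|) else 0)
    else 0) := by
  split_ifs <;>
    first
    | rfl
    | simp
    | exact add_nonneg (le_max_left _ _) (le_max_left _ _)

lemma term_ge {n : ℕ} (m : ℕ) (g : List Step) {w : Fin n → Fin n}
    (winj : Function.Injective w) (r K : Fin n) (hrK : (r : ℕ) < (K : ℕ)) :
    (m : ℤ) - max |aLine m g (r : ℕ) - aLine m g (K : ℕ)|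
        |aLine m g (K : ℕ) - aLine m g (r : ℕ) + 1| ≤
      (if (r : ℕ) < (K : ℕ) then
        (if w r < w K then max 0 ((m : ℤ) - |aLine m g (r : ℕ) - aLine m g (K : ℕ)|) else 0) +
          (if w K < w r then max 0 ((m : ℤ) - |aLine m g (K : ℕ) - aLine m g (r : ℕ) + 1|) else 0)
      else 0) := by
  rw [if_pos hrK]
  have hne : w r ≠ w K := by
    intro h
    have : r = K := winj h
    rw [this] at hrK
    exact lt_irrefl _ hrK
  rcases hne.lt_or_gt with h | h
  · rw [if_pos h, if_neg (asymm h)]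
    have h1 : |aLine m g (r : ℕ) - aLine m g (K : ℕ)| ≤
        max |aLine m g (r : ℕ) - aLine m g (K : ℕ)|
          |aLine m g (K : ℕ) - aLine m g (r : ℕ) + 1| := le_max_left _ _
    have h2 : (m : ℤ) - |aLine m g (r : ℕ) - aLine m g (K : ℕ)| ≤
        max 0 ((m : ℤ) - |aLine m g (r : ℕ) - aLine m g (K : ℕ)|) := le_max_right _ _
    linarith
  · rw [if_neg (asymm h), if_pos h]
    have h1 : |aLine m g (K : ℕ) - aLine m g (r : ℕ) + 1| ≤
        max |aLine m g (r : ℕ) - aLine m g (K : ℕ)|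
          |aLine m g (K : ℕ) - aLine m g (r : ℕ) + 1| := le_max_right _ _
    have h2 : (m : ℤ) - |aLine m g (K : ℕ) - aLine m g (r : ℕ) + 1| ≤
        max 0 ((m : ℤ) - |aLine m g (K : ℕ) - aLine m g (r : ℕ) + 1|) := le_max_right _ _
    linarith

/-- If the Dyck path of an `(n,mn)`-parking function contains a factor
`N E^p N` with `p > m`, then `dinv(γ,w) ≥ m - 1`. -/
theorem stmt8 (n m : ℕ) (hm : 1 ≤ m) (g : List Step) (w : Fin n → Fin n)
    (hpark : IsParking n m g w) (p : ℕ) (hpm : m < p)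
    (hfac : ∃ u v : List Step,
      g = u ++ Step.N :: (List.replicate p Step.E ++ Step.N :: v)) :
    (m : ℤ) - 1 ≤ dinv n m g w := by
  classical
  obtain ⟨u, v, hg⟩ := hfac
  obtain ⟨⟨hND, hNg, hEg, hpref⟩, ⟨winj, wsurj⟩, hcol⟩ := hpark
  set k : ℕ := cnt N u with hk
  -- n ≥ k + 2
  have hn : k + 2 ≤ n := by
    have h2 : List.count N g = List.count N u + 2 + List.count N v := by
      rw [hg]
      simp [List.count_append, List.count_cons, List.count_replicate]
      omega
    have h3 : List.count N g = n := hNg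
    have h4 : k = List.count N u := hk
    omega
  -- eBefore values at k and k+1
  have hek : eBefore g k = cnt E u := by
    rw [hg, eBefore_append u _ k le_rfl]
    simp [eBefore, hk]
  have hek1 : eBefore g (k+1) = cnt E u + p := by
    rw [hg, eBefore_append u _ (k+1) (by omega)]
    have h1 : k + 1 - k = 1 := by omega
    rw [h1]
    have : eBefore (N :: (List.replicate p E ++ N :: v)) 1
        = eBefore (List.replicate p E ++ N :: v) 0 := by simp [eBefore]
    rw [this, eBefore_replicateE]
    simp [eBefore]
  -- the diagonal coordinates
  set c : ℤ := aLine m g (k+1) with hc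
  have hak : aLine m g k = c + (p - m) := by
    rw [hc]
    simp only [aLine, hek, hek1]
    push_cast
    ring
  -- c ≥ 0
  have hc0 : 0 ≤ c := by
    obtain ⟨q, hq, hqN, hqE⟩ := eBefore_prefix g (k+1) (by omega)
    have := hpref q hq
    rw [hqN, hqE] at this
    rw [hc]
    simp only [aLine]
    have : (eBefore g (k+1) : ℤ) ≤ (m : ℤ) * (k+1) := by exact_mod_cast this
    push_cast
    linarith
  -- find the minimal i with aLine > c
  have hPk : c < aLine m g k := by
    rw [hak]
    have : (1 : ℤ) ≤ (p : ℤ) - m := by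
      have : (m : ℤ) + 1 ≤ p := by exact_mod_cast hpm
      linarith
    linarith
  have hex : ∃ j, c < aLine m g j := ⟨k, hPk⟩
  set i : ℕ := Nat.find hex with hi
  have hPi : c < aLine m g i := Nat.find_spec hex
  have hik : i ≤ k := Nat.find_min' hex hPk
  have hipos : 0 < i := by
    rcases Nat.eq_zero_or_pos i with h0 | h
    · exfalso
      have := hPi
      rw [h0] at this
      have ha0 : aLine m g 0 ≤ 0 := by
        simp only [aLine]
        push_cast
        have : (0 : ℤ) ≤ (eBefore g 0 : ℤ) := by positivity
        linarith
      linarith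
    · exact h
  have hprev : ¬ c < aLine m g (i-1) := Nat.find_min hex (by omega)
  push_neg at hprev
  -- step bound : aLine i ≤ aLine (i-1) + m
  have hstep : aLine m g i ≤ aLine m g (i-1) + m := by
    have hmono : (eBefore g (i-1) : ℤ) ≤ (eBefore g i : ℤ) := by
      have := eBefore_mono g (i-1)
      have h1 : i - 1 + 1 = i := by omega
      rw [h1] at this
      exact_mod_cast this
    have hcast : ((i - 1 : ℕ) : ℤ) = (i : ℤ) - 1 := by
      have : (1:ℕ) ≤ i := hipos
      push_cast [this]
      ring
    simp only [aLine, hcast]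
    have hm' : (0:ℤ) ≤ m := by positivity
    nlinarith [hmono]
  -- set up the Fin elements
  have hi1n : i - 1 < n := by omega
  have hin : i < n := by omega
  have hKn : k + 1 < n := by omega
  set r1 : Fin n := ⟨i - 1, hi1n⟩ with hr1
  set r2 : Fin n := ⟨i, hin⟩ with hr2
  set K : Fin n := ⟨k + 1, hKn⟩ with hK
  have hr12 : r1 ≠ r2 := by
    intro h
    have : i - 1 = i := congrArg Fin.val h
    omega
  -- the summand function
  set f : Fin n → Fin n → ℤ := fun i j =>
    if (i : ℕ) < (j : ℕ) then
      (if w i < w j then max 0 ((m : ℤ) - |aLine m g (i : ℕ) - aLine m g (j : ℕ)|) else 0) +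
        (if w j < w i then max 0 ((m : ℤ) - |aLine m g (j : ℕ) - aLine m g (i : ℕ) + 1|) else 0)
    else 0 with hf
  have hf0 : ∀ a b : Fin n, 0 ≤ f a b := fun a b => summand_nonneg n m g w a b
  have hdinv : dinv n m g w = ∑ a : Fin n, ∑ b : Fin n, f a b := rfl
  -- bounds on the two chosen terms
  have hval1 : c = aLine m g (K : ℕ) := by rw [hK, hc]
  have hb1 : (m : ℤ) - (c - aLine m g (i-1) + 1) ≤ f r1 K := by
    have h := term_ge m g winj r1 K (by simp [hr1, hK]; omega)
    have hmax : max |aLine m g (r1 : ℕ) - aLine m g (K : ℕ)|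
        |aLine m g (K : ℕ) - aLine m g (r1 : ℕ) + 1| ≤ c - aLine m g (i-1) + 1 := by
      have hv : (r1 : ℕ) = i - 1 := rfl
      rw [hv, ← hval1]
      refine max_le (abs_le.mpr ⟨by linarith, by linarith⟩)
        (abs_le.mpr ⟨by linarith [hc0], by linarith⟩)
    calc (m : ℤ) - (c - aLine m g (i-1) + 1)
        ≤ (m : ℤ) - max |aLine m g (r1 : ℕ) - aLine m g (K : ℕ)|
            |aLine m g (K : ℕ) - aLine m g (r1 : ℕ) + 1| := by linarith
      _ ≤ f r1 K := h
  have hb2 : (m : ℤ) - (aLine m g i - c) ≤ f r2 K := by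
    have h := term_ge m g winj r2 K (by simp [hr2, hK]; omega)
    have hd1 : (1 : ℤ) ≤ aLine m g i - c := by linarith
    have hmax : max |aLine m g (r2 : ℕ) - aLine m g (K : ℕ)|
        |aLine m g (K : ℕ) - aLine m g (r2 : ℕ) + 1| ≤ aLine m g i - c := by
      have hv : (r2 : ℕ) = i := rfl
      rw [hv, ← hval1]
      refine max_le (abs_le.mpr ⟨by linarith, by linarith⟩)
        (abs_le.mpr ⟨by linarith, by linarith⟩)
    calc (m : ℤ) - (aLine m g i - c)
        ≤ (m : ℤ) - max |aLine m g (r2 : ℕ) - aLine m g (K : ℕ)|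
            |aLine m g (K : ℕ) - aLine m g (r2 : ℕ) + 1| := by linarith
      _ ≤ f r2 K := h
  -- assemble
  have hinner1 : f r1 K ≤ ∑ b : Fin n, f r1 b :=
    Finset.single_le_sum (fun b _ => hf0 r1 b) (Finset.mem_univ K)
  have hinner2 : f r2 K ≤ ∑ b : Fin n, f r2 b :=
    Finset.single_le_sum (fun b _ => hf0 r2 b) (Finset.mem_univ K)
  have houter : (∑ b : Fin n, f r1 b) + (∑ b : Fin n, f r2 b)
      ≤ ∑ a : Fin n, ∑ b : Fin n, f a b := by
    have := Finset.sum_le_sum_of_subset_of_nonneg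
      (f := fun a : Fin n => ∑ b : Fin n, f a b)
      (Finset.subset_univ ({r1, r2} : Finset (Fin n)))
      (fun a _ _ => Finset.sum_nonneg fun b _ => hf0 a b)
    rwa [Finset.sum_pair hr12] at this
  have hsum : (m : ℤ) - 1 ≤ f r1 K + f r2 K := by
    have hde : aLine m g i - aLine m g (i-1) ≤ m := by linarith
    linarith
  rw [hdinv]
  linarith
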